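/- Let $c_1, \dots, c_s$ be distinct real numbers with Lagrange basis polynomials $\ell_i$ and weights $b_i = \int_0^1 \ell_i \neq 0$. Let $\eta : \mathbb{R} \to \mathbb{R}$ be continuous and set $\phi(t) = \int_{t_0+h/2}^{t} \eta(s)\,ds$ (so that the diagonal damping matrix $D(t) = \eta(t) I_N$ has equal diagonal elements). Let $f : \mathbb{R}^N \to \mathbb{R}^N$ be continuous and $c \in \mathbb{R}^N$ with $c^T f(y) = 0$ for all $y$ (so that $M(x) = c^T x$ is a linear invariant of $\dot{x} = f(x)$). Let $v : \mathbb{R} \to \mathbb{R}^N$ be a polynomial map of degree at most $s$ with $v(t_0) = e^{\phi(t_0)} x_0$ and collocation conditions $\dot{v}(t_0 + c_i h) = \frac{1}{b_i}\int_0^1 \ell_i(\tau) f(v(t_0+\tau h))\,d\tau$ for $i = 1, \dots, s$, and set $x_1 = e^{-\phi(t_0+h)} v(t_0+h)$. Then $c^T x_1 = e^{-\int_{t_0}^{t_0+h} \eta(s)\,ds}\, c^T x_0$, i.e., the exponential collocation method preserves the exact dissipation rate of the linear invariant $M$. -/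

import Mathlib

open Matrix MeasureTheory

/-- For scalar damping `D(t) = η(t) Iₙ` (so `e^{Y(t)}` reduces to the scalar
`e^{φ(t)}` with `φ(t) = ∫_{t₀+h/2}^t η(s) ds`), the exponential collocation method preserves
the exact dissipation rate of a linear invariant `M(x) = mᵀx` (with `mᵀ f(y) = 0` for all
`y`): if `v` is a collocation polynomial of degree at most `s` with `v(t₀) = e^{φ(t₀)} x₀`
and `x₁ = e^{-φ(t₀+h)} v(t₀+h)`, then `mᵀ x₁ = e^{-∫_{t₀}^{t₀+h} η} mᵀ x₀`. -/
theorem exponential_collocation_linear_invariant_dissipation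
    {N s : ℕ}
    (c : Fin s → ℝ) (hc : Function.Injective c)
    (ℓ : Fin s → ℝ → ℝ)
    (hℓ : ∀ i τ, ℓ i τ = ∏ j ∈ Finset.univ.erase i, (τ - c j) / (c i - c j))
    (b : Fin s → ℝ) (hb : ∀ i, b i = ∫ τ in (0:ℝ)..1, ℓ i τ)
    (hbne : ∀ i, b i ≠ 0)
    (t₀ h : ℝ)
    (η : ℝ → ℝ) (hη : Continuous η)
    (φ : ℝ → ℝ) (hφ : ∀ t, φ t = ∫ u in (t₀ + h/2)..t, η u)
    (f : (Fin N → ℝ) → (Fin N → ℝ)) (hf : Continuous f)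
    (m : Fin N → ℝ) (hm : ∀ y, dotProduct m (f y) = 0)
    (x₀ x₁ : Fin N → ℝ)
    (v : ℝ → (Fin N → ℝ))
    (hv : ∀ k, ∃ p : Polynomial ℝ, p.natDegree ≤ s ∧ ∀ t, v t k = p.eval t)
    (hv0 : v t₀ = Real.exp (φ t₀) • x₀)
    (hcoll : ∀ i, HasDerivAt v
      ((b i)⁻¹ • ∫ τ in (0:ℝ)..1, ℓ i τ • f (v (t₀ + τ * h)))
      (t₀ + c i * h))
    (hx1 : x₁ = Real.exp (-φ (t₀ + h)) • v (t₀ + h)) :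
    dotProduct m x₁ =
      Real.exp (-(∫ u in t₀..(t₀ + h), η u)) * dotProduct m x₀ := by
  classical
  subst hx1
  by_cases hh : h = 0
  · subst hh
    simp [hv0, smul_smul, ← Real.exp_add, dotProduct_smul, smul_eq_mul]
  · have hvcont : Continuous v := by
      apply continuous_pi
      intro k
      obtain ⟨p, _, hp⟩ := hv k
      have : (fun t => v t k) = fun t => p.eval t := funext hp
      rw [this]; exact p.continuous
    have hℓcont : ∀ i, Continuous (ℓ i) := by
      intro i
      have : ℓ i = fun τ => ∏ j ∈ Finset.univ.erase i, (τ - c j) / (c i - c j) :=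
        funext (hℓ i)
      rw [this]
      exact continuous_finset_prod _ fun j _ =>
        (continuous_id.sub continuous_const).div_const _
    set L : (Fin N → ℝ) →L[ℝ] ℝ :=
      ∑ k, (m k) • (ContinuousLinearMap.proj (R := ℝ) (φ := fun _ : Fin N => ℝ) k) with hL
    have hLapp : ∀ x, L x = dotProduct m x := by
      intro x
      simp [hL, ContinuousLinearMap.sum_apply, dotProduct, smul_eq_mul]
    have hderiv0 : ∀ i, HasDerivAt (fun t => dotProduct m (v t)) 0 (t₀ + c i * h) := by
      intro i
      have hInt : IntervalIntegrable (fun τ => ℓ i τ • f (v (t₀ + τ * h))) volume 0 1 :=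
        ((hℓcont i).smul (hf.comp (hvcont.comp (by continuity)))).intervalIntegrable _ _
      have h1 : L ((b i)⁻¹ • ∫ τ in (0:ℝ)..1, ℓ i τ • f (v (t₀ + τ * h))) = 0 := by
        rw [L.map_smul, ← ContinuousLinearMap.intervalIntegral_comp_comm _ hInt]
        have h2 : (fun τ => L (ℓ i τ • f (v (t₀ + τ * h)))) = fun _ => (0:ℝ) := by
          funext τ
          rw [L.map_smul, hLapp, hm, smul_zero]
        simp only [h2]
        simp
      have h3 := (L.hasFDerivAt.comp_hasDerivAt _ (hcoll i)).congr_deriv h1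
      have h4 : ⇑L ∘ v = fun t => dotProduct m (v t) := by
        funext t; exact hLapp _
      rw [h4] at h3
      exact h3
    choose p hpdeg hpeval using hv
    set P : Polynomial ℝ := ∑ k, Polynomial.C (m k) * p k with hP
    have hPeval : ∀ t, P.eval t = dotProduct m (v t) := by
      intro t
      simp [hP, Polynomial.eval_finset_sum, dotProduct, hpeval]
    have hPdeg : P.natDegree ≤ s :=
      Polynomial.natDegree_sum_le_of_forall_le _ _ fun k _ =>
        (Polynomial.natDegree_C_mul_le _ _).trans (hpdeg k)
    have hD0 : P.derivative = 0 := by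
      by_cases hd : P.natDegree = 0
      · obtain ⟨a, ha⟩ := Polynomial.natDegree_eq_zero.mp hd
        rw [← ha]; simp
      · have hlt : P.derivative.natDegree < s :=
          lt_of_lt_of_le (Polynomial.natDegree_derivative_lt hd) hPdeg
        have hinj : Function.Injective (fun i : Fin s => t₀ + c i * h) := by
          intro i j hij
          apply hc
          have := add_left_cancel hij
          exact mul_right_cancel₀ hh this
        refine Polynomial.eq_zero_of_natDegree_lt_card_of_eval_eq_zero _ hinj ?_ ?_
        · intro i
          have h5 : HasDerivAt (fun t => P.eval t)
              (P.derivative.eval (t₀ + c i * h)) (t₀ + c i * h) := P.hasDerivAt _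
          have h6 : (fun t => P.eval t) = fun t => dotProduct m (v t) :=
            funext hPeval
          rw [h6] at h5
          exact h5.unique (hderiv0 i)
        · simpa using hlt
    have hconst : P.eval (t₀ + h) = P.eval t₀ := by
      obtain ⟨a, ha⟩ := Polynomial.natDegree_eq_zero.mp
        (Polynomial.natDegree_eq_zero_of_derivative_eq_zero hD0)
      rw [← ha]; simp
    have key : dotProduct m (v (t₀ + h)) =
        Real.exp (φ t₀) * dotProduct m x₀ := by
      rw [← hPeval, hconst, hPeval, hv0, dotProduct_smul, smul_eq_mul]
    have hint : φ t₀ + (∫ u in t₀..(t₀ + h), η u) = φ (t₀ + h) := by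
      rw [hφ, hφ]
      exact intervalIntegral.integral_add_adjacent_intervals
        (hη.intervalIntegrable _ _) (hη.intervalIntegrable _ _)
    rw [dotProduct_smul, smul_eq_mul, key, ← mul_assoc, ← Real.exp_add]
    congr 2
    linarith
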